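/- Any sequence of flips on a perfect straight-line matching of 2n points in general position terminates: there is no infinite sequence of matchings where each is obtained from the previous by a flip. -/

import Mathlib

/-- `m` encodes a perfect straight-line matching on the finite point set `P`:
it is a fixed-point-free involution of `P`, pairing each point with the other
endpoint of its segment. -/
def IsPerfectMatching (P : Finset (ℝ × ℝ)) (m : ℝ × ℝ → ℝ × ℝ) : Prop :=
  (∀ p ∈ P, m p ∈ P) ∧ (∀ p ∈ P, m (m p) = p) ∧ (∀ p ∈ P, m p ≠ p)

/-- `m'` is obtained from `m` by a flip: two segments `p₁p₂` and `p₃p₄` of `m`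
whose relative interiors intersect are replaced by a different perfect matching
of `{p₁, p₂, p₃, p₄}`, all other segments being unchanged. -/
def IsFlip (P : Finset (ℝ × ℝ)) (m m' : ℝ × ℝ → ℝ × ℝ) : Prop :=
  ∃ p₁ p₂ p₃ p₄, p₁ ∈ P ∧ p₂ ∈ P ∧ p₃ ∈ P ∧ p₄ ∈ P ∧
    m p₁ = p₂ ∧ m p₃ = p₄ ∧
    (openSegment ℝ p₁ p₂ ∩ openSegment ℝ p₃ p₄).Nonempty ∧
    (∀ q ∈ P, q ∉ ({p₁, p₂, p₃, p₄} : Set (ℝ × ℝ)) → m' q = m q) ∧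
    m' p₁ ∈ ({p₁, p₂, p₃, p₄} : Set (ℝ × ℝ)) ∧
    m' p₃ ∈ ({p₁, p₂, p₃, p₄} : Set (ℝ × ℝ)) ∧
    m' p₁ ≠ p₂

noncomputable def E2 : (ℝ × ℝ) ≃ₗ[ℝ] EuclideanSpace ℝ (Fin 2) :=
  (LinearEquiv.finTwoArrow ℝ ℝ).symm.trans (WithLp.linearEquiv 2 ℝ (Fin 2 → ℝ)).symm

lemma E2_openSegment {a b x : ℝ × ℝ} (h : x ∈ openSegment ℝ a b) :
    E2 x ∈ openSegment ℝ (E2 a) (E2 b) := by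
  obtain ⟨u, v, hu, hv, huv, rfl⟩ := h
  exact ⟨u, v, hu, hv, huv, by simp [map_add, map_smul]⟩

lemma E2_segment_back {a c x : ℝ × ℝ} (h : E2 x ∈ segment ℝ (E2 a) (E2 c)) :
    x ∈ segment ℝ a c := by
  obtain ⟨u, v, hu, hv, huv, hx⟩ := h
  exact ⟨u, v, hu, hv, huv, E2.injective (by rw [map_add, map_smul, map_smul, hx])⟩

lemma collinear_of_segments {a b c x : ℝ × ℝ} (hab : a ≠ b)
    (h1 : x ∈ openSegment ℝ a b) (h2 : x ∈ segment ℝ a c) :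
    Collinear ℝ ({a, b, c} : Set (ℝ × ℝ)) := by
  obtain ⟨u, v, hu, hv, huv, hx1⟩ := h1
  obtain ⟨s, t, hs, ht, hst, hx2⟩ := h2
  have h : u • a + v • b = s • a + t • c := hx1.trans hx2.symm
  have h1' : u * a.1 + v * b.1 = s * a.1 + t * c.1 := congrArg Prod.fst h
  have h2' : u * a.2 + v * b.2 = s * a.2 + t * c.2 := congrArg Prod.snd h
  have ht0 : t ≠ 0 := by
    rintro rfl
    apply hab
    have hu' : u = 1 - v := by linarith
    have hs1 : s = 1 := by linarith
    apply Prod.ext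
    · have : v * a.1 = v * b.1 := by rw [hu', hs1] at h1'; linarith
      exact (mul_left_cancel₀ hv.ne' this)
    · have : v * a.2 = v * b.2 := by rw [hu', hs1] at h2'; linarith
      exact (mul_left_cancel₀ hv.ne' this)
  rw [collinear_iff_of_mem (Set.mem_insert a _)]
  refine ⟨b - a, fun p hp => ?_⟩
  rcases hp with rfl | rfl | rfl
  · exact ⟨0, by simp⟩
  · exact ⟨1, by simp⟩
  · refine ⟨v / t, ?_⟩
    have hu' : u = 1 - v := by linarith
    have hs' : s = 1 - t := by linarith
    apply Prod.ext
    · show p.1 = (v / t * (b.1 - a.1)) + a.1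
      rw [hu', hs'] at h1'
      field_simp
      ring_nf
      nlinarith [h1']
    · show p.2 = (v / t * (b.2 - a.2)) + a.2
      rw [hu', hs'] at h2'
      field_simp
      ring_nf
      nlinarith [h2']

lemma key {a b c d x : ℝ × ℝ} (hab : a ≠ b)
    (h1 : x ∈ openSegment ℝ a b) (h2 : x ∈ openSegment ℝ c d)
    (hcol : ¬ Collinear ℝ ({a, b, c} : Set (ℝ × ℝ))) :
    dist (E2 a) (E2 c) + dist (E2 b) (E2 d) < dist (E2 a) (E2 b) + dist (E2 c) (E2 d) := by
  have hx1 := E2_openSegment h1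
  have hx2 := E2_openSegment h2
  have w1 : Wbtw ℝ (E2 a) (E2 x) (E2 b) :=
    mem_segment_iff_wbtw.mp (openSegment_subset_segment _ _ _ hx1)
  have w2 : Wbtw ℝ (E2 c) (E2 x) (E2 d) :=
    mem_segment_iff_wbtw.mp (openSegment_subset_segment _ _ _ hx2)
  have e1 : dist (E2 a) (E2 x) + dist (E2 x) (E2 b) = dist (E2 a) (E2 b) :=
    dist_add_dist_eq_iff.mpr w1
  have e2 : dist (E2 c) (E2 x) + dist (E2 x) (E2 d) = dist (E2 c) (E2 d) :=
    dist_add_dist_eq_iff.mpr w2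
  have t3 : dist (E2 a) (E2 c) < dist (E2 a) (E2 x) + dist (E2 x) (E2 c) := by
    rcases lt_or_eq_of_le (dist_triangle (E2 a) (E2 x) (E2 c)) with h | h
    · exact h
    · exact absurd
        (collinear_of_segments hab h1 (E2_segment_back (dist_add_dist_eq_iff.mp h.symm).mem_segment))
        hcol
  have t4 : dist (E2 b) (E2 d) ≤ dist (E2 b) (E2 x) + dist (E2 x) (E2 d) := dist_triangle _ _ _
  have c1 : dist (E2 x) (E2 c) = dist (E2 c) (E2 x) := dist_comm _ _
  have c2 : dist (E2 b) (E2 x) = dist (E2 x) (E2 b) := dist_comm _ _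
  linarith

lemma flip_decreases {P : Finset (ℝ × ℝ)} {m m' : ℝ × ℝ → ℝ × ℝ}
    (hgp : ∀ p ∈ P, ∀ q ∈ P, ∀ r ∈ P, p ≠ q → p ≠ r → q ≠ r →
      ¬ Collinear ℝ ({p, q, r} : Set (ℝ × ℝ)))
    (hm : IsPerfectMatching P m) (hm' : IsPerfectMatching P m') (hf : IsFlip P m m') :
    ∑ p ∈ P, dist (E2 p) (E2 (m' p)) < ∑ p ∈ P, dist (E2 p) (E2 (m p)) := by
  obtain ⟨p₁, p₂, p₃, p₄, hp₁, hp₂, hp₃, hp₄, hm1, hm3, ⟨x, hx1, hx2⟩, hoff, hm'1, hm'3, hne⟩ := hf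
  obtain ⟨hmem, hinv, hfpf⟩ := hm
  obtain ⟨hmem', hinv', hfpf'⟩ := hm'
  have hm2 : m p₂ = p₁ := by rw [← hm1, hinv p₁ hp₁]
  have hm4 : m p₄ = p₃ := by rw [← hm3, hinv p₃ hp₃]
  have h12 : p₁ ≠ p₂ := fun h => hfpf p₁ hp₁ (hm1.trans h.symm)
  have h34 : p₃ ≠ p₄ := fun h => hfpf p₃ hp₃ (hm3.trans h.symm)
  -- rule out degenerate overlaps
  have hdistinct : ∀ h24' : ({p₁, p₂, p₃, p₄} : Set (ℝ × ℝ)) = {p₁, p₂}, False := by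
    intro hset
    have := hm'1
    rw [hset] at this
    rcases this with h | h
    · exact hfpf' p₁ hp₁ h
    · exact hne h
  have h13 : p₁ ≠ p₃ := by
    rintro rfl
    have : p₂ = p₄ := by rw [← hm1, ← hm3]
    subst this
    exact hdistinct (by ext q; simp; try tauto)
  have h14 : p₁ ≠ p₄ := by
    rintro rfl
    have : p₂ = p₃ := by rw [← hm1, hm4]
    subst this
    exact hdistinct (by ext q; simp; try tauto)
  have h23 : p₂ ≠ p₃ := by
    rintro rfl
    have : p₁ = p₄ := by rw [← hm2, hm3]
    exact h14 this
  have h24 : p₂ ≠ p₄ := by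
    rintro rfl
    have : p₁ = p₃ := by rw [← hm2, hm4]
    exact h13 this
  -- determine m' on the four points
  have hm'2_mem : m' p₂ ∈ ({p₁, p₂, p₃, p₄} : Set (ℝ × ℝ)) := by
    by_contra hq
    have hq' : m' (m' p₂) = m (m' p₂) := hoff _ (hmem' p₂ hp₂) hq
    have h5 : m (m' p₂) = p₂ := by rw [← hq', hinv' p₂ hp₂]
    have : m' p₂ = p₁ := by rw [← hinv (m' p₂) (hmem' p₂ hp₂), h5, hm2]
    exact hq (by rw [this]; left; rfl)
  have hcase : (m' p₁ = p₃ ∧ m' p₂ = p₄ ∧ m' p₃ = p₁ ∧ m' p₄ = p₂) ∨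
      (m' p₁ = p₄ ∧ m' p₂ = p₃ ∧ m' p₃ = p₂ ∧ m' p₄ = p₁) := by
    have h1' : m' p₁ ≠ p₁ := hfpf' p₁ hp₁
    simp only [Set.mem_insert_iff, Set.mem_singleton_iff] at hm'1 hm'2_mem
    rcases hm'1 with h | h | h | h
    · exact absurd h h1'
    · exact absurd h hne
    · -- m' p₁ = p₃
      left
      have hm'3' : m' p₃ = p₁ := by rw [← h, hinv' p₁ hp₁]
      have hm'2 : m' p₂ = p₄ := by
        rcases hm'2_mem with h2 | h2 | h2 | h2
        · exact absurd (by rw [← hinv' p₂ hp₂, h2, h] : p₂ = p₃) h23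
        · exact absurd h2 (hfpf' p₂ hp₂)
        · exact absurd (by rw [← hinv' p₂ hp₂, h2, hm'3'] : p₂ = p₁) h12.symm
        · exact h2
      exact ⟨h, hm'2, hm'3', by rw [← hm'2, hinv' p₂ hp₂]⟩
    · -- m' p₁ = p₄
      right
      have hm'4 : m' p₄ = p₁ := by rw [← h, hinv' p₁ hp₁]
      have hm'2 : m' p₂ = p₃ := by
        rcases hm'2_mem with h2 | h2 | h2 | h2
        · exact absurd (by rw [← hinv' p₂ hp₂, h2, h] : p₂ = p₄) h24
        · exact absurd h2 (hfpf' p₂ hp₂)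
        · exact h2
        · exact absurd (by rw [← hinv' p₂ hp₂, h2, hm'4] : p₂ = p₁) h12.symm
      exact ⟨h, hm'2, by rw [← hm'2, hinv' p₂ hp₂], hm'4⟩
  -- sums
  set S : Finset (ℝ × ℝ) := {p₁, p₂, p₃, p₄} with hS_def
  have hS : S ⊆ P := by
    intro q hq
    simp only [hS_def, Finset.mem_insert, Finset.mem_singleton] at hq
    rcases hq with rfl | rfl | rfl | rfl <;> assumption
  have hsum : ∀ g : ℝ × ℝ → ℝ, ∑ p ∈ S, g p = g p₁ + (g p₂ + (g p₃ + g p₄)) := by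
    intro g
    rw [hS_def, Finset.sum_insert (by simp [h12, h13, h14]),
      Finset.sum_insert (by simp [h23, h24]), Finset.sum_insert (by simp [h34]),
      Finset.sum_singleton]
  have hsplit : ∀ k : ℝ × ℝ → ℝ × ℝ,
      ∑ p ∈ P, dist (E2 p) (E2 (k p)) =
        ∑ p ∈ P \ S, dist (E2 p) (E2 (k p)) + ∑ p ∈ S, dist (E2 p) (E2 (k p)) :=
    fun k => (Finset.sum_sdiff hS).symm
  rw [hsplit m, hsplit m']
  have hoffsum : ∑ p ∈ P \ S, dist (E2 p) (E2 (m' p)) = ∑ p ∈ P \ S, dist (E2 p) (E2 (m p)) := by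
    refine Finset.sum_congr rfl fun q hq => ?_
    rw [Finset.mem_sdiff] at hq
    rw [hoff q hq.1 (by simpa [hS_def] using hq.2)]
  rw [hoffsum]
  refine (add_lt_add_iff_left _).mpr ?_
  rw [hsum, hsum, hm1, hm2, hm3, hm4]
  have cBA : dist (E2 p₂) (E2 p₁) = dist (E2 p₁) (E2 p₂) := dist_comm _ _
  have cDC : dist (E2 p₄) (E2 p₃) = dist (E2 p₃) (E2 p₄) := dist_comm _ _
  have hncol3 : ¬ Collinear ℝ ({p₁, p₂, p₃} : Set (ℝ × ℝ)) :=
    hgp p₁ hp₁ p₂ hp₂ p₃ hp₃ h12 h13 h23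
  have hncol4 : ¬ Collinear ℝ ({p₁, p₂, p₄} : Set (ℝ × ℝ)) :=
    hgp p₁ hp₁ p₂ hp₂ p₄ hp₄ h12 h14 h24
  rcases hcase with ⟨e1, e2, e3, e4⟩ | ⟨e1, e2, e3, e4⟩ <;> rw [e1, e2, e3, e4]
  · have := key h12 hx1 hx2 hncol3
    have cCA : dist (E2 p₃) (E2 p₁) = dist (E2 p₁) (E2 p₃) := dist_comm _ _
    have cDB : dist (E2 p₄) (E2 p₂) = dist (E2 p₂) (E2 p₄) := dist_comm _ _
    linarith
  · have hx2' : x ∈ openSegment ℝ p₄ p₃ := by rwa [openSegment_symm]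
    have := key h12 hx1 hx2' hncol4
    have cCD : dist (E2 p₄) (E2 p₃) = dist (E2 p₃) (E2 p₄) := dist_comm _ _
    have cCB : dist (E2 p₃) (E2 p₂) = dist (E2 p₂) (E2 p₃) := dist_comm _ _
    have cDA : dist (E2 p₄) (E2 p₁) = dist (E2 p₁) (E2 p₄) := dist_comm _ _
    linarith

/-- Any sequence of flips on a perfect straight-line matching of `2n` points in
general position terminates: there is no infinite sequence of perfect matchings
each obtained from the previous one by a flip. -/
theorem flip_sequences_terminate (n : ℕ) (P : Finset (ℝ × ℝ))
    (hcard : P.card = 2 * n)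
    (hgp : ∀ p ∈ P, ∀ q ∈ P, ∀ r ∈ P, p ≠ q → p ≠ r → q ≠ r →
      ¬ Collinear ℝ ({p, q, r} : Set (ℝ × ℝ))) :
    ¬ ∃ f : ℕ → (ℝ × ℝ → ℝ × ℝ),
        (∀ i, IsPerfectMatching P (f i)) ∧ ∀ i, IsFlip P (f i) (f (i + 1)) := by
  rintro ⟨f, hpm, hflip⟩
  set L : (ℝ × ℝ → ℝ × ℝ) → ℝ := fun m => ∑ p ∈ P, dist (E2 p) (E2 (m p)) with hL
  have hdec : ∀ i, L (f (i + 1)) < L (f i) :=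
    fun i => flip_decreases hgp (hpm i) (hpm (i + 1)) (hflip i)
  have hanti : StrictAnti (fun i => L (f i)) := strictAnti_nat_of_succ_lt hdec
  have : ∀ i, ∀ p ∈ P, f i p ∈ P := fun i => (hpm i).1
  let F : ℕ → (↥P → ↥P) := fun i p => ⟨f i p.1, this i p.1 p.2⟩
  obtain ⟨i, j, hne, hEq⟩ := Finite.exists_ne_map_eq_of_infinite F
  have hLij : L (f i) = L (f j) := by
    refine Finset.sum_congr rfl fun p hp => ?_
    have := congrFun hEq ⟨p, hp⟩
    have hval : f i p = f j p := congrArg Subtype.val this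
    rw [hval]
  exact hne (hanti.injective hLij)
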